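/- Let b > 0 and c ∈ ℝ, and define T(R) = R·(1 − Q(b·(c − R))) for R ∈ [0, c], where Q is the Gaussian tail function. Then T''(R) = −(2b/√(2π))·e^{−b²(c−R)²/2} − (R·b²·b(c−R)/√(2π))·e^{−b²(c−R)²/2} ≤ 0 on [0, c]; in particular, T is concave on [0, c]. -/

import Mathlib

noncomputable def gaussQ (x : ℝ) : ℝ :=
  ∫ t in Set.Ioi x, (Real.sqrt (2 * Real.pi))⁻¹ * Real.exp (-t ^ 2 / 2)

noncomputable def phi (x : ℝ) : ℝ := (Real.sqrt (2 * Real.pi))⁻¹ * Real.exp (-x ^ 2 / 2)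

lemma integrable_phi : MeasureTheory.Integrable phi := by
  have h : MeasureTheory.Integrable (fun t : ℝ => Real.exp (-(1/2 : ℝ) * t ^ 2)) :=
    integrable_exp_neg_mul_sq (by norm_num)
  have := h.const_mul (Real.sqrt (2 * Real.pi))⁻¹
  refine this.congr ?_
  filter_upwards with t
  unfold phi
  ring_nf

lemma continuous_phi : Continuous phi := by
  unfold phi
  fun_prop

lemma gaussQ_eq (x : ℝ) : gaussQ x = gaussQ 0 - ∫ t in (0:ℝ)..x, phi t := by
  have key : ∀ a b : ℝ, a ≤ b →
      (∫ t in Set.Ioi a, phi t) = (∫ t in a..b, phi t) + ∫ t in Set.Ioi b, phi t := by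
    intro a b hab
    rw [intervalIntegral.integral_of_le hab,
      ← MeasureTheory.setIntegral_union _ measurableSet_Ioi
        (integrable_phi.integrableOn) (integrable_phi.integrableOn),
      Set.Ioc_union_Ioi_eq_Ioi hab]
    · rw [Set.disjoint_left]; intro t ht ht'
      exact absurd ht.2 (not_le.mpr ht')
  have hg : ∀ y : ℝ, gaussQ y = ∫ t in Set.Ioi y, phi t := fun y => rfl
  rcases le_total 0 x with h | h
  · rw [hg, hg, key 0 x h]; ring
  · rw [hg, hg, key x 0 h, intervalIntegral.integral_symm]; ring

lemma hasDerivAt_gaussQ (x : ℝ) : HasDerivAt gaussQ (-(phi x)) x := by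
  have h : HasDerivAt (fun y : ℝ => ∫ t in (0:ℝ)..y, phi t) (phi x) x :=
    (intervalIntegral.integral_hasStrictDerivAt_right
      (continuous_phi.intervalIntegrable 0 x)
      (continuous_phi.stronglyMeasurableAtFilter _ _)
      continuous_phi.continuousAt).hasDerivAt
  have h2 := (h.const_sub (gaussQ 0))
  refine h2.congr_of_eventuallyEq ?_
  filter_upwards with y
  rw [gaussQ_eq y]

lemma hasDerivAt_phi (x : ℝ) : HasDerivAt phi (-x * phi x) x := by
  have h1 : HasDerivAt (fun t : ℝ => -t ^ 2 / 2) (-x) x := by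
    have := ((hasDerivAt_pow 2 x).neg).div_const 2
    exact this.congr_deriv (by push_cast; ring)
  have h2 := (h1.exp).const_mul (Real.sqrt (2 * Real.pi))⁻¹
  exact h2.congr_deriv (by unfold phi; ring)

section main

variable (b c : ℝ)

noncomputable def T1 (R : ℝ) : ℝ := 1 - gaussQ (b * (c - R)) - R * b * phi (b * (c - R))

lemma hasDerivAt_u (R : ℝ) : HasDerivAt (fun R : ℝ => b * (c - R)) (-b) R := by
  have := ((hasDerivAt_id R).const_sub c).const_mul b
  exact this.congr_deriv (by ring)

lemma hasDerivAt_T (R : ℝ) :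
    HasDerivAt (fun R => R * (1 - gaussQ (b * (c - R)))) (T1 b c R) R := by
  have hg : HasDerivAt (fun R : ℝ => 1 - gaussQ (b * (c - R)))
      (-(b * phi (b * (c - R)))) R := by
    have := (((hasDerivAt_gaussQ (b * (c - R))).comp R (hasDerivAt_u b c R)).const_sub 1)
    exact this.congr_deriv (by ring)
  have := (hasDerivAt_id R).mul hg
  exact this.congr_deriv (by unfold T1; simp only [id_eq]; ring)

lemma hasDerivAt_T1 (R : ℝ) :
    HasDerivAt (T1 b c)
      (-2 * b * phi (b * (c - R)) - R * b ^ 2 * (b * (c - R)) * phi (b * (c - R))) R := by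
  have hphi : HasDerivAt (fun R : ℝ => phi (b * (c - R)))
      (b ^ 2 * (c - R) * phi (b * (c - R))) R := by
    have := (hasDerivAt_phi (b * (c - R))).comp R (hasDerivAt_u b c R)
    exact this.congr_deriv (by ring)
  have hg : HasDerivAt (fun R : ℝ => 1 - gaussQ (b * (c - R)))
      (-(b * phi (b * (c - R)))) R := by
    have := (((hasDerivAt_gaussQ (b * (c - R))).comp R (hasDerivAt_u b c R)).const_sub 1)
    exact this.congr_deriv (by ring)
  have hmul : HasDerivAt (fun R : ℝ => R * b * phi (b * (c - R)))
      (b * phi (b * (c - R)) + R * b * (b ^ 2 * (c - R) * phi (b * (c - R)))) R := by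
    have := ((hasDerivAt_id R).mul_const b).mul hphi
    exact this.congr_deriv (by simp only [id_eq]; ring)
  have : HasDerivAt (T1 b c)
      ((-(b * phi (b * (c - R)))) -
        (b * phi (b * (c - R)) + R * b * (b ^ 2 * (c - R) * phi (b * (c - R))))) R := by
    unfold T1
    exact (hg.sub hmul).congr_of_eventuallyEq (by filter_upwards with y; simp only [Pi.sub_apply])
  exact this.congr_deriv (by ring)

end main

theorem throughput_concave (b c : ℝ) (hb : 0 < b)
    (T : ℝ → ℝ) (hT : T = fun R => R * (1 - gaussQ (b * (c - R)))) :
    (∀ R ∈ Set.Icc (0 : ℝ) c,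
      deriv (deriv T) R =
        -(2 * b / Real.sqrt (2 * Real.pi)) * Real.exp (-(b ^ 2 * (c - R) ^ 2) / 2) -
          (R * b ^ 2 * (b * (c - R)) / Real.sqrt (2 * Real.pi)) *
            Real.exp (-(b ^ 2 * (c - R) ^ 2) / 2) ∧
      -(2 * b / Real.sqrt (2 * Real.pi)) * Real.exp (-(b ^ 2 * (c - R) ^ 2) / 2) -
          (R * b ^ 2 * (b * (c - R)) / Real.sqrt (2 * Real.pi)) *
            Real.exp (-(b ^ 2 * (c - R) ^ 2) / 2) ≤ 0) ∧
    ConcaveOn ℝ (Set.Icc (0 : ℝ) c) T := by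
  subst hT
  have hderiv : deriv (fun R => R * (1 - gaussQ (b * (c - R)))) = T1 b c := by
    funext R; exact (hasDerivAt_T b c R).deriv
  have hphieq : ∀ R : ℝ, phi (b * (c - R)) =
      (Real.sqrt (2 * Real.pi))⁻¹ * Real.exp (-(b ^ 2 * (c - R) ^ 2) / 2) := by
    intro R; unfold phi; congr 2; ring
  have hderiv2 : ∀ R : ℝ, deriv (deriv (fun R => R * (1 - gaussQ (b * (c - R))))) R =
      -(2 * b / Real.sqrt (2 * Real.pi)) * Real.exp (-(b ^ 2 * (c - R) ^ 2) / 2) -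
        (R * b ^ 2 * (b * (c - R)) / Real.sqrt (2 * Real.pi)) *
          Real.exp (-(b ^ 2 * (c - R) ^ 2) / 2) := by
    intro R
    rw [hderiv, (hasDerivAt_T1 b c R).deriv, hphieq]
    field_simp
  have hsqrt : (0:ℝ) < Real.sqrt (2 * Real.pi) :=
    Real.sqrt_pos.mpr (by positivity)
  have hnonpos : ∀ R ∈ Set.Icc (0 : ℝ) c,
      -(2 * b / Real.sqrt (2 * Real.pi)) * Real.exp (-(b ^ 2 * (c - R) ^ 2) / 2) -
        (R * b ^ 2 * (b * (c - R)) / Real.sqrt (2 * Real.pi)) *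
          Real.exp (-(b ^ 2 * (c - R) ^ 2) / 2) ≤ 0 := by
    intro R hR
    have h1 : 0 ≤ R := hR.1
    have h2 : 0 ≤ c - R := by linarith [hR.2]
    have he : 0 < Real.exp (-(b ^ 2 * (c - R) ^ 2) / 2) := Real.exp_pos _
    have ht1 : 0 ≤ 2 * b / Real.sqrt (2 * Real.pi) * Real.exp (-(b ^ 2 * (c - R) ^ 2) / 2) := by
      positivity
    have ht2 : 0 ≤ R * b ^ 2 * (b * (c - R)) / Real.sqrt (2 * Real.pi) *
        Real.exp (-(b ^ 2 * (c - R) ^ 2) / 2) := by positivity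
    linarith
  refine ⟨fun R hR => ⟨hderiv2 R, hnonpos R hR⟩, ?_⟩
  refine concaveOn_of_deriv2_nonpos (convex_Icc 0 c) ?_ ?_ ?_ ?_
  · exact fun R _ => (hasDerivAt_T b c R).continuousAt.continuousWithinAt
  · exact fun R _ => (hasDerivAt_T b c R).differentiableAt.differentiableWithinAt
  · intro R _
    rw [hderiv]
    exact (hasDerivAt_T1 b c R).differentiableAt.differentiableWithinAt
  · intro R hR
    have hR' : R ∈ Set.Icc (0:ℝ) c := interior_subset hR
    simp only [Function.iterate_succ, Function.iterate_zero, Function.comp_apply, id_eq]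
    rw [hderiv2]
    exact hnonpos R hR'
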